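/- (Privacy amplification.) Let P_{XZ} be a joint probability mass function on a finite set 𝒳 × 𝒵 and let (Xⁿ, Zⁿ) be distributed according to the n-fold product P_{XZ}^{⊗n}. For every ε > 0 there exists n₀ such that for all n ≥ n₀ there exist a natural number L ≥ 2^{n(H(X|Z)−ε)} and a hash function h : 𝒳ⁿ → {1,…,L} such that the total variation (ℓ¹) distance between the joint law of (h(Xⁿ), Zⁿ) and the product of the uniform distribution on {1,…,L} with P_Z^{⊗n} is at most ε. -/

import Mathlib

/-!
STATEMENT 8 (Privacy amplification): Let `P` be a joint pmf on a finite set `𝒳 × 𝒵` and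
let `(Xⁿ, Zⁿ) ~ P^{⊗n}`.  For every `ε > 0` and all sufficiently large `n`, there are
`L ≥ 2^{n(H(X|Z)−ε)}` and a hash `h : 𝒳ⁿ → {1,…,L}` such that the total variation (ℓ¹)
distance between the joint law of `(h(Xⁿ), Zⁿ)` and the product of the uniform
distribution on `{1,…,L}` with `P_Z^{⊗n}` is at most `ε`.
-/

open scoped Classical
open Finset

/-- Shannon entropy in bits. -/
noncomputable def shannonEntropy {α : Type*} [Fintype α] (p : α → ℝ) : ℝ :=
  -∑ a, p a * Real.logb 2 (p a)

/-- Marginal distribution of `Z`. -/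
noncomputable def margZ {𝒳 𝒵 : Type*} [Fintype 𝒳] [Fintype 𝒵] (P : 𝒳 × 𝒵 → ℝ) : 𝒵 → ℝ :=
  fun z => ∑ x, P (x, z)

/-- Conditional entropy `H(X|Z) = H(X,Z) − H(Z)` in bits. -/
noncomputable def condEntXZ {𝒳 𝒵 : Type*} [Fintype 𝒳] [Fintype 𝒵] (P : 𝒳 × 𝒵 → ℝ) : ℝ :=
  shannonEntropy P - shannonEntropy (margZ P)

set_option maxHeartbeats 1000000

lemma PA.master {𝒳 𝒵 : Type*} [Fintype 𝒳] [Fintype 𝒵] (n : ℕ) (ψ : Fin n → (𝒳 × 𝒵) → ℝ) :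
    ∑ x : Fin n → 𝒳, ∑ z : Fin n → 𝒵, ∏ k, ψ k (x k, z k) = ∏ k, ∑ w : 𝒳 × 𝒵, ψ k w := by
  rw [Fintype.prod_sum]
  have h2 : ∑ p : (Fin n → 𝒳) × (Fin n → 𝒵), ∏ k, ψ k (p.1 k, p.2 k)
      = ∑ ω : Fin n → 𝒳 × 𝒵, ∏ k, ψ k (ω k) := by
    apply Fintype.sum_equiv (Equiv.arrowProdEquivProdArrow (Fin n) (fun _ => 𝒳) (fun _ => 𝒵)).symm
    intro p; rfl
  rw [← h2, Fintype.sum_prod_type]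

lemma PA.hash_single {D : Type*} [Fintype D] [DecidableEq D] {L : ℕ} (F : Fin L → ℝ) (x : D) :
    (L : ℝ) * ∑ h : D → Fin L, F (h x)
      = (Fintype.card (D → Fin L) : ℝ) * ∑ v, F v := by
  have h1 : ∑ h : D → Fin L, F (h x)
      = ∑ q : Fin L × ({ j // j ≠ x } → Fin L), F q.1 := by
    rw [← Equiv.sum_comp (Equiv.funSplitAt x (Fin L)).symm (fun h : D → Fin L => F (h x))]
    apply Fintype.sum_congr
    intro q
    congr 1
    simp [Equiv.funSplitAt, Equiv.piSplitAt]
  have hcard : Fintype.card (D → Fin L)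
      = L * Fintype.card ({ j // j ≠ x } → Fin L) := by
    rw [Fintype.card_congr (Equiv.funSplitAt x (Fin L)), Fintype.card_prod, Fintype.card_fin]
  rw [h1, Fintype.sum_prod_type, hcard]
  simp only [Finset.sum_const, Finset.card_univ, nsmul_eq_mul]
  rw [← Finset.mul_sum]
  push_cast
  ring

lemma PA.hash_pair {D : Type*} [Fintype D] [DecidableEq D] {L : ℕ} (F G : Fin L → ℝ) {x x' : D} (hne : x' ≠ x) :
    ((L : ℝ))^2 * ∑ h : D → Fin L, F (h x) * G (h x')
      = (Fintype.card (D → Fin L) : ℝ) * ((∑ v, F v) * (∑ v, G v)) := by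
  have h1 : ∑ h : D → Fin L, F (h x) * G (h x')
      = ∑ q : Fin L × ({ j // j ≠ x } → Fin L), F q.1 * G (q.2 ⟨x', hne⟩) := by
    rw [← Equiv.sum_comp (Equiv.funSplitAt x (Fin L)).symm
      (fun h : D → Fin L => F (h x) * G (h x'))]
    apply Fintype.sum_congr
    intro q
    congr 1
    · congr 1; simp [Equiv.funSplitAt, Equiv.piSplitAt]
    · congr 1; simp [Equiv.funSplitAt, Equiv.piSplitAt, hne]
  have hcard : Fintype.card (D → Fin L)
      = L * Fintype.card ({ j // j ≠ x } → Fin L) := by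
    rw [Fintype.card_congr (Equiv.funSplitAt x (Fin L)), Fintype.card_prod, Fintype.card_fin]
  have h5 : ∑ b : { j // j ≠ x } → Fin L, G (b ⟨x', hne⟩)
      = ∑ r : Fin L × ({ j : { j // j ≠ x } // j ≠ ⟨x', hne⟩ } → Fin L), G r.1 := by
    rw [← Equiv.sum_comp (Equiv.funSplitAt (⟨x', hne⟩ : { j // j ≠ x }) (Fin L)).symm
      (fun b : { j // j ≠ x } → Fin L => G (b ⟨x', hne⟩))]
    apply Fintype.sum_congr
    intro r
    congr 1
    simp [Equiv.funSplitAt, Equiv.piSplitAt]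
  have hcard2 : Fintype.card ({ j // j ≠ x } → Fin L)
      = L * Fintype.card ({ j : { j // j ≠ x } // j ≠ ⟨x', hne⟩ } → Fin L) := by
    rw [Fintype.card_congr (Equiv.funSplitAt (⟨x', hne⟩ : { j // j ≠ x }) (Fin L)),
      Fintype.card_prod, Fintype.card_fin]
  have h3 : ∑ q : Fin L × ({ j // j ≠ x } → Fin L), F q.1 * G (q.2 ⟨x', hne⟩)
      = (∑ a, F a) * (∑ b : { j // j ≠ x } → Fin L, G (b ⟨x', hne⟩)) := by
    rw [Fintype.sum_prod_type, Finset.sum_mul]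
    exact Finset.sum_congr rfl fun a _ => by rw [Finset.mul_sum]
  rw [h1, h3, h5, Fintype.sum_prod_type]
  simp only [Finset.sum_const, Finset.card_univ, nsmul_eq_mul]
  rw [← Finset.mul_sum, hcard, hcard2]
  push_cast
  ring

lemma PA.exp_Y {D : Type*} [Fintype D] [DecidableEq D] {L : ℕ} (c : D → ℝ) (j : Fin L) :
    (L : ℝ) * ∑ h : D → Fin L, (∑ x, if h x = j then c x else 0)
      = (Fintype.card (D → Fin L) : ℝ) * ∑ x, c x := by
  rw [Finset.sum_comm, Finset.mul_sum]
  have step : ∀ x : D, (L : ℝ) * ∑ h : D → Fin L, (if h x = j then c x else 0)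
      = (Fintype.card (D → Fin L) : ℝ) * c x := by
    intro x
    have := PA.hash_single (fun v => if v = j then c x else 0) x
    simpa using this
  rw [← Finset.mul_sum]
  calc (L:ℝ) * ∑ x : D, ∑ h : D → Fin L, (if h x = j then c x else 0)
      = ∑ x : D, ((L:ℝ) * ∑ h : D → Fin L, (if h x = j then c x else 0)) := Finset.mul_sum _ _ _
    _ = ∑ x : D, (Fintype.card (D → Fin L) : ℝ) * c x := Finset.sum_congr rfl fun x _ => step x
    _ = _ := (Finset.mul_sum _ _ _).symm

lemma PA.exp_Y2 {D : Type*} [Fintype D] [DecidableEq D] {L : ℕ} (c : D → ℝ) (j : Fin L) :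
    ((L : ℝ))^2 * ∑ h : D → Fin L, (∑ x, if h x = j then c x else 0)^2
      = (Fintype.card (D → Fin L) : ℝ)
        * ((∑ x, c x)^2 + ((L:ℝ) - 1) * ∑ x, (c x)^2) := by
  have expand : ∀ h : D → Fin L, (∑ x, if h x = j then c x else 0)^2
      = ∑ x, ∑ x', (if h x = j then c x else 0) * (if h x' = j then c x' else 0) := by
    intro h; rw [sq, Finset.sum_mul_sum]
  calc ((L : ℝ))^2 * ∑ h : D → Fin L, (∑ x, if h x = j then c x else 0)^2
      = ((L : ℝ))^2 * ∑ h : D → Fin L, ∑ x, ∑ x',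
          (if h x = j then c x else 0) * (if h x' = j then c x' else 0) := by
        rw [Finset.sum_congr rfl fun h _ => expand h]
    _ = ∑ x, ∑ x', ((L : ℝ))^2 * ∑ h : D → Fin L,
          (if h x = j then c x else 0) * (if h x' = j then c x' else 0) := by
        rw [Finset.sum_comm]
        rw [Finset.mul_sum]
        refine Finset.sum_congr rfl fun x _ => ?_
        rw [Finset.sum_comm, Finset.mul_sum]
    _ = ∑ x, (((L:ℝ) - 1) * (Fintype.card (D → Fin L) : ℝ) * (c x)^2
          + ∑ x', (Fintype.card (D → Fin L) : ℝ) * (c x * c x')) := by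
        refine Finset.sum_congr rfl fun x _ => ?_
        rw [← Finset.add_sum_erase _ _ (Finset.mem_univ x)]
        have diag : ((L : ℝ))^2 * ∑ h : D → Fin L,
            (if h x = j then c x else 0) * (if h x = j then c x else 0)
            = (L:ℝ) * ((Fintype.card (D → Fin L) : ℝ) * (c x * c x)) := by
          have h2 : ∀ h : D → Fin L,
              (if h x = j then c x else 0) * (if h x = j then c x else 0)
              = (if h x = j then c x * c x else 0) := by
            intro h; by_cases hh : h x = j <;> simp [hh]
          rw [Finset.sum_congr rfl fun h _ => h2 h]
          have := PA.hash_single (fun v => if v = j then c x * c x else 0) x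
          simp only [Finset.sum_ite_eq', Finset.mem_univ, if_true] at this
          calc ((L : ℝ))^2 * ∑ h : D → Fin L, (if h x = j then c x * c x else 0)
              = (L:ℝ) * ((L : ℝ) * ∑ h : D → Fin L, (if h x = j then c x * c x else 0)) := by ring
            _ = _ := by rw [this]
        have offdiag : ∀ x' ∈ Finset.univ.erase x, ((L : ℝ))^2 * ∑ h : D → Fin L,
            (if h x = j then c x else 0) * (if h x' = j then c x' else 0)
            = (Fintype.card (D → Fin L) : ℝ) * (c x * c x') := by
          intro x' hx'
          have hne : x' ≠ x := Finset.ne_of_mem_erase hx'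
          have := PA.hash_pair (fun v => if v = j then c x else 0)
            (fun v => if v = j then c x' else 0) hne
          simpa using this
        rw [Finset.sum_congr rfl offdiag, diag]
        rw [← Finset.add_sum_erase _ (fun x' => (Fintype.card (D → Fin L) : ℝ) * (c x * c x'))
          (Finset.mem_univ x)]
        ring
    _ = _ := by
        rw [Finset.sum_add_distrib]
        have e1 : ∑ x : D, ((L:ℝ) - 1) * (Fintype.card (D → Fin L) : ℝ) * (c x)^2
            = ((L:ℝ) - 1) * (Fintype.card (D → Fin L) : ℝ) * ∑ x, (c x)^2 := by
          rw [Finset.mul_sum]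
        have e2 : ∑ x : D, ∑ x', (Fintype.card (D → Fin L) : ℝ) * (c x * c x')
            = (Fintype.card (D → Fin L) : ℝ) * (∑ x, c x)^2 := by
          rw [sq, Finset.sum_mul_sum, Finset.mul_sum]
          refine Finset.sum_congr rfl fun x _ => ?_
          rw [Finset.mul_sum]
        rw [e1, e2]
        ring

lemma PA.hash_var {D : Type*} [Fintype D] [DecidableEq D] {L : ℕ} (hL : 0 < L) (c : D → ℝ) (j : Fin L) :
    ∑ h : D → Fin L, ((∑ x, if h x = j then c x else 0) - (∑ x, c x)/L)^2
      ≤ (Fintype.card (D → Fin L) : ℝ) * ((∑ x, (c x)^2) / L) := by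
  have hL0 : (0:ℝ) < (L:ℝ) := by exact_mod_cast hL
  have hLne : (L:ℝ) ≠ 0 := ne_of_gt hL0
  have e1 := PA.exp_Y c j
  have e2 := PA.exp_Y2 c j
  have NH0 : (0:ℝ) ≤ (Fintype.card (D → Fin L) : ℝ) := Nat.cast_nonneg _
  obtain ⟨NH, hNH⟩ : ∃ NH : ℝ, (Fintype.card (D → Fin L) : ℝ) = NH := ⟨_, rfl⟩
  rw [hNH] at e1 e2 NH0 ⊢
  set a := ∑ x, c x with ha
  have expand : ∀ h : D → Fin L, ((∑ x, if h x = j then c x else 0) - a/L)^2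
      = (∑ x, if h x = j then c x else 0)^2
        - (2*a/L) * (∑ x, if h x = j then c x else 0) + (a/L)^2 := by
    intro h; field_simp; ring
  have q1 : ∑ h : D → Fin L, (∑ x, if h x = j then c x else 0) = NH * a / L := by
    rw [eq_div_iff hLne]; linarith [e1]
  have q2 : ∑ h : D → Fin L, (∑ x, if h x = j then c x else 0)^2
      = NH * (a^2 + ((L:ℝ) - 1) * ∑ x, (c x)^2) / (L:ℝ)^2 := by
    rw [eq_div_iff (pow_ne_zero 2 hLne)]; linarith [e2]
  have key : ∑ h : D → Fin L, ((∑ x, if h x = j then c x else 0) - a/L)^2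
      = NH * (((L:ℝ) - 1) * ∑ x, (c x)^2) / (L:ℝ)^2 := by
    rw [Finset.sum_congr rfl fun h _ => expand h]
    rw [Finset.sum_add_distrib, Finset.sum_sub_distrib, ← Finset.mul_sum,
      Finset.sum_const, Finset.card_univ, nsmul_eq_mul, hNH, q1, q2]
    field_simp
    ring
  rw [key]
  have hsq : (0:ℝ) ≤ ∑ x, (c x)^2 := Finset.sum_nonneg fun x _ => sq_nonneg _
  rw [mul_div_assoc', div_le_div_iff₀ (by positivity) hL0]
  nlinarith [mul_nonneg (mul_nonneg NH0 hsq) hL0.le]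

lemma PA.hash_abs {D : Type*} [Fintype D] [DecidableEq D] {L : ℕ} (hL : 0 < L) (c : D → ℝ) (j : Fin L) :
    ∑ h : D → Fin L, |(∑ x, if h x = j then c x else 0) - (∑ x, c x)/L|
      ≤ (Fintype.card (D → Fin L) : ℝ) * Real.sqrt ((∑ x, (c x)^2) / L) := by
  set NH := (Fintype.card (D → Fin L) : ℝ) with hNH
  have NH0 : 0 ≤ NH := Nat.cast_nonneg _
  set W := fun h : D → Fin L => (∑ x, if h x = j then c x else 0) - (∑ x, c x)/L with hW
  have cs := Finset.sum_mul_sq_le_sq_mul_sq Finset.univ (fun _ : D → Fin L => (1:ℝ))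
    (fun h => |W h|)
  simp only [one_mul, one_pow, sq_abs, Finset.sum_const, Finset.card_univ, nsmul_eq_mul,
    mul_one] at cs
  -- cs : (∑ h, |W h|)^2 ≤ NH * ∑ h, W h ^ 2
  have hv := PA.hash_var hL c j
  have habs : (∑ h, |W h|)^2 ≤ NH^2 * ((∑ x, (c x)^2) / L) := by
    calc (∑ h, |W h|)^2 ≤ NH * ∑ h, (W h)^2 := cs
      _ ≤ NH * (NH * ((∑ x, (c x)^2) / L)) := by
          apply mul_le_mul_of_nonneg_left _ NH0
          exact hv
      _ = NH^2 * ((∑ x, (c x)^2) / L) := by ring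
  have h0 : 0 ≤ ∑ h, |W h| := Finset.sum_nonneg fun h _ => abs_nonneg _
  have := Real.sqrt_le_sqrt habs
  rw [Real.sqrt_sq h0] at this
  calc ∑ h, |W h| ≤ Real.sqrt (NH^2 * ((∑ x, (c x)^2) / L)) := this
    _ = NH * Real.sqrt ((∑ x, (c x)^2) / L) := by
        rw [Real.sqrt_mul (sq_nonneg _), Real.sqrt_sq NH0]

section Prob
variable {𝒳 𝒵 : Type*} [Fintype 𝒳] [Fintype 𝒵]

lemma PA.moment_single (P : 𝒳 × 𝒵 → ℝ) (h1 : ∑ w, P w = 1) (g : 𝒳 × 𝒵 → ℝ)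
    {n : ℕ} (k l : Fin n) :
    ∑ x : Fin n → 𝒳, ∑ z : Fin n → 𝒵,
        (∏ i, P (x i, z i)) * (g (x k, z k) * g (x l, z l))
      = if k = l then ∑ w, P w * g w ^ 2
        else (∑ w, P w * g w) * (∑ w, P w * g w) := by
  have hrw : ∀ (x : Fin n → 𝒳) (z : Fin n → 𝒵),
      (∏ i, P (x i, z i)) * (g (x k, z k) * g (x l, z l))
      = ∏ i, (P (x i, z i) * ((if i = k then g (x i, z i) else 1)
          * (if i = l then g (x i, z i) else 1))) := by
    intro x z
    rw [Finset.prod_mul_distrib, Finset.prod_mul_distrib,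
      Finset.prod_ite_eq' Finset.univ k (fun i => g (x i, z i)),
      Finset.prod_ite_eq' Finset.univ l (fun i => g (x i, z i))]
    simp
  calc ∑ x : Fin n → 𝒳, ∑ z : Fin n → 𝒵,
        (∏ i, P (x i, z i)) * (g (x k, z k) * g (x l, z l))
      = ∑ x : Fin n → 𝒳, ∑ z : Fin n → 𝒵, ∏ i,
          (P (x i, z i) * ((if i = k then g (x i, z i) else 1)
            * (if i = l then g (x i, z i) else 1))) := by
        refine Finset.sum_congr rfl fun x _ => Finset.sum_congr rfl fun z _ => hrw x z
    _ = ∏ i, ∑ w : 𝒳 × 𝒵, (P w * ((if i = k then g w else 1) * (if i = l then g w else 1))) :=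
        PA.master n (fun i w => P w * ((if i = k then g w else 1) * (if i = l then g w else 1)))
    _ = ∏ i, (if i = k then (if i = l then ∑ w, P w * g w ^ 2 else ∑ w, P w * g w)
          else (if i = l then ∑ w, P w * g w else 1)) := by
        refine Finset.prod_congr rfl fun i _ => ?_
        by_cases hik : i = k <;> by_cases hil : i = l <;>
          simp [hik, hil, h1, sq, mul_comm, mul_assoc]
    _ = _ := by
        by_cases hkl : k = l
        · subst hkl
          rw [if_pos rfl]
          have : ∀ i : Fin n, (if i = k then (if i = k then ∑ w, P w * g w ^ 2
              else ∑ w, P w * g w) else (if i = k then ∑ w, P w * g w else 1))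
              = (if i = k then ∑ w, P w * g w ^ 2 else 1) := by
            intro i; by_cases h : i = k <;> simp [h]
          rw [Finset.prod_congr rfl fun i _ => this i,
            Finset.prod_ite_eq' Finset.univ k (fun _ => ∑ w, P w * g w ^ 2)]
          simp
        · rw [if_neg hkl]
          have : ∀ i : Fin n, (if i = k then (if i = l then ∑ w, P w * g w ^ 2
              else ∑ w, P w * g w) else (if i = l then ∑ w, P w * g w else 1))
              = (if i = k then ∑ w, P w * g w else 1) * (if i = l then ∑ w, P w * g w else 1) := by
            intro i
            have hlk : ¬ l = k := fun h => hkl h.symm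
            rcases eq_or_ne i k with hik|hik <;> rcases eq_or_ne i l with hil|hil
            · exact absurd (hik.symm.trans hil) hkl
            · simp [hik, hil, hkl, hlk]
            · simp [hik, hil, hkl, hlk]
            · simp [hik, hil]
          rw [Finset.prod_congr rfl fun i _ => this i, Finset.prod_mul_distrib,
            Finset.prod_ite_eq' Finset.univ k (fun _ => ∑ w, P w * g w),
            Finset.prod_ite_eq' Finset.univ l (fun _ => ∑ w, P w * g w)]
          simp

lemma PA.second_moment (P : 𝒳 × 𝒵 → ℝ) (h1 : ∑ w, P w = 1) (g : 𝒳 × 𝒵 → ℝ)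
    (hg0 : ∑ w, P w * g w = 0) (n : ℕ) :
    ∑ x : Fin n → 𝒳, ∑ z : Fin n → 𝒵,
        (∏ i, P (x i, z i)) * (∑ k, g (x k, z k))^2
      = n * ∑ w, P w * g w ^ 2 := by
  have expand : ∀ (x : Fin n → 𝒳) (z : Fin n → 𝒵),
      (∏ i, P (x i, z i)) * (∑ k, g (x k, z k))^2
      = ∑ k, ∑ l, (∏ i, P (x i, z i)) * (g (x k, z k) * g (x l, z l)) := by
    intro x z
    rw [sq, Finset.sum_mul_sum]
    rw [Finset.mul_sum]
    refine Finset.sum_congr rfl fun k _ => ?_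
    rw [Finset.mul_sum]
  calc ∑ x : Fin n → 𝒳, ∑ z : Fin n → 𝒵, (∏ i, P (x i, z i)) * (∑ k, g (x k, z k))^2
      = ∑ x : Fin n → 𝒳, ∑ z : Fin n → 𝒵, ∑ k, ∑ l,
          (∏ i, P (x i, z i)) * (g (x k, z k) * g (x l, z l)) := by
        exact Finset.sum_congr rfl fun x _ => Finset.sum_congr rfl fun z _ => expand x z
    _ = ∑ k : Fin n, ∑ l : Fin n, ∑ x : Fin n → 𝒳, ∑ z : Fin n → 𝒵,
          (∏ i, P (x i, z i)) * (g (x k, z k) * g (x l, z l)) := by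
        calc ∑ x : Fin n → 𝒳, ∑ z : Fin n → 𝒵, ∑ k : Fin n, ∑ l : Fin n,
              (∏ i, P (x i, z i)) * (g (x k, z k) * g (x l, z l))
            = ∑ x : Fin n → 𝒳, ∑ k : Fin n, ∑ z : Fin n → 𝒵, ∑ l : Fin n,
              (∏ i, P (x i, z i)) * (g (x k, z k) * g (x l, z l)) := by
              exact Finset.sum_congr rfl fun x _ => Finset.sum_comm
          _ = ∑ k : Fin n, ∑ x : Fin n → 𝒳, ∑ z : Fin n → 𝒵, ∑ l : Fin n,
              (∏ i, P (x i, z i)) * (g (x k, z k) * g (x l, z l)) := Finset.sum_comm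
          _ = ∑ k : Fin n, ∑ x : Fin n → 𝒳, ∑ l : Fin n, ∑ z : Fin n → 𝒵,
              (∏ i, P (x i, z i)) * (g (x k, z k) * g (x l, z l)) := by
              exact Finset.sum_congr rfl fun k _ => Finset.sum_congr rfl fun x _ =>
                Finset.sum_comm
          _ = ∑ k : Fin n, ∑ l : Fin n, ∑ x : Fin n → 𝒳, ∑ z : Fin n → 𝒵,
              (∏ i, P (x i, z i)) * (g (x k, z k) * g (x l, z l)) := by
              exact Finset.sum_congr rfl fun k _ => Finset.sum_comm
    _ = ∑ k : Fin n, ∑ l : Fin n, (if k = l then ∑ w, P w * g w ^ 2 else 0) := by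
        refine Finset.sum_congr rfl fun k _ => Finset.sum_congr rfl fun l _ => ?_
        rw [PA.moment_single P h1 g k l, hg0]
        by_cases h : k = l <;> simp [h]
    _ = _ := by
        rw [Finset.sum_congr rfl fun k _ =>
          Finset.sum_ite_eq Finset.univ k (fun _ => ∑ w, P w * g w ^ 2)]
        simp [Finset.sum_const, Finset.card_univ, mul_comm]

end Prob

section Mean
variable {𝒳 𝒵 : Type*} [Fintype 𝒳] [Fintype 𝒵]

lemma PA.sum_margZ (P : 𝒳 × 𝒵 → ℝ) (h1 : ∑ w, P w = 1) : ∑ z, margZ P z = 1 := by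
  rw [← h1, Fintype.sum_prod_type_right]
  rfl

lemma PA.mean (P : 𝒳 × 𝒵 → ℝ) (h1 : ∑ w, P w = 1) :
    ∑ w, P w * (if P w = 0 then 0 else Real.logb 2 (P w) - Real.logb 2 (margZ P w.2))
      = -(condEntXZ P) := by
  have step : ∀ w : 𝒳 × 𝒵, P w * (if P w = 0 then 0
        else Real.logb 2 (P w) - Real.logb 2 (margZ P w.2))
      = P w * Real.logb 2 (P w) - P w * Real.logb 2 (margZ P w.2) := by
    intro w
    by_cases hw : P w = 0
    · simp [hw]
    · rw [if_neg hw, mul_sub]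
  rw [Finset.sum_congr rfl fun w _ => step w, Finset.sum_sub_distrib]
  have margstep : ∑ w : 𝒳 × 𝒵, P w * Real.logb 2 (margZ P w.2)
      = ∑ z, margZ P z * Real.logb 2 (margZ P z) := by
    rw [Fintype.sum_prod_type_right]
    refine Finset.sum_congr rfl fun z _ => ?_
    show ∑ x : 𝒳, P (x, z) * Real.logb 2 (margZ P z) = margZ P z * Real.logb 2 (margZ P z)
    rw [← Finset.sum_mul]
    rfl
  rw [margstep]
  unfold condEntXZ shannonEntropy
  ring

end Mean

section Cheb
variable {𝒳 𝒵 : Type*} [Fintype 𝒳] [Fintype 𝒵]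

lemma PA.cheb (P : 𝒳 × 𝒵 → ℝ) (h0 : ∀ w, 0 ≤ P w) (h1 : ∑ w, P w = 1)
    (g : 𝒳 × 𝒵 → ℝ) (hg0 : ∑ w, P w * g w = 0)
    {n : ℕ} (hn : 0 < n) {δ : ℝ} (hδ : 0 < δ)
    (bad : (Fin n → 𝒳) → (Fin n → 𝒵) → Prop)
    (hbad : ∀ x z, bad x z → (n:ℝ) * δ ≤ ∑ k, g (x k, z k)) :
    ∑ x : Fin n → 𝒳, ∑ z : Fin n → 𝒵,
        (if bad x z then ∏ i, P (x i, z i) else 0)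
      ≤ (∑ w, P w * g w ^ 2) / ((n:ℝ) * δ^2) := by
  have hn0 : (0:ℝ) < (n:ℝ) := by exact_mod_cast hn
  have hnd : (0:ℝ) < ((n:ℝ) * δ)^2 := by positivity
  have point : ∀ (x : Fin n → 𝒳) (z : Fin n → 𝒵),
      (if bad x z then ∏ i, P (x i, z i) else 0)
      ≤ (∏ i, P (x i, z i)) * (∑ k, g (x k, z k))^2 / ((n:ℝ) * δ)^2 := by
    intro x z
    have hPn : 0 ≤ ∏ i, P (x i, z i) := Finset.prod_nonneg fun i _ => h0 _
    by_cases hb : bad x z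
    · rw [if_pos hb]
      have hS := hbad x z hb
      have hS2 : ((n:ℝ) * δ)^2 ≤ (∑ k, g (x k, z k))^2 :=
        pow_le_pow_left₀ (by positivity) hS 2
      rw [le_div_iff₀ hnd]
      nlinarith
    · rw [if_neg hb]
      positivity
  calc ∑ x : Fin n → 𝒳, ∑ z : Fin n → 𝒵, (if bad x z then ∏ i, P (x i, z i) else 0)
      ≤ ∑ x : Fin n → 𝒳, ∑ z : Fin n → 𝒵,
          (∏ i, P (x i, z i)) * (∑ k, g (x k, z k))^2 / ((n:ℝ) * δ)^2 :=
        Finset.sum_le_sum fun x _ => Finset.sum_le_sum fun z _ => point x z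
    _ = (∑ x : Fin n → 𝒳, ∑ z : Fin n → 𝒵,
          (∏ i, P (x i, z i)) * (∑ k, g (x k, z k))^2) / ((n:ℝ) * δ)^2 := by
        rw [Finset.sum_div]
        exact Finset.sum_congr rfl fun x _ => by rw [Finset.sum_div]
    _ = ((n:ℝ) * ∑ w, P w * g w ^ 2) / ((n:ℝ) * δ)^2 := by
        rw [PA.second_moment P h1 g hg0 n]
    _ = (∑ w, P w * g w ^ 2) / ((n:ℝ) * δ^2) := by
        field_simp
end Cheb

section Dev
variable {𝒳 𝒵 : Type*} [Fintype 𝒳] [Fintype 𝒵]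

lemma PA.margZ_nonneg (P : 𝒳 × 𝒵 → ℝ) (h0 : ∀ w, 0 ≤ P w) (z : 𝒵) : 0 ≤ margZ P z :=
  Finset.sum_nonneg fun a _ => h0 (a, z)

lemma PA.sum_x_Pn (P : 𝒳 × 𝒵 → ℝ) {n : ℕ} (z : Fin n → 𝒵) :
    ∑ x : Fin n → 𝒳, ∏ k, P (x k, z k) = ∏ k, margZ P (z k) := by
  rw [← Fintype.prod_sum (fun k a => P (a, z k))]
  rfl

lemma PA.sum_z_Mz (P : 𝒳 × 𝒵 → ℝ) (h0 : ∀ w, 0 ≤ P w) (h1 : ∑ w, P w = 1) (n : ℕ) :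
    ∑ z : Fin n → 𝒵, ∏ k, margZ P (z k) = 1 := by
  rw [← Fintype.prod_sum (fun (k : Fin n) (b : 𝒵) => margZ P b)]
  rw [Finset.prod_congr rfl fun k _ => PA.sum_margZ P h1]
  simp

lemma PA.deviation (P : 𝒳 × 𝒵 → ℝ) (h0 : ∀ w, 0 ≤ P w) {n : ℕ} (t : ℝ)
    (x : Fin n → 𝒳) (z : Fin n → 𝒵)
    (hb : (2:ℝ) ^ (-((n:ℝ) * t)) * ∏ k, margZ P (z k) < ∏ k, P (x k, z k)) :
    -((n:ℝ) * t) < ∑ k, (if P (x k, z k) = 0 then 0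
      else Real.logb 2 (P (x k, z k)) - Real.logb 2 (margZ P (z k))) := by
  have hβ : (0:ℝ) < (2:ℝ) ^ (-((n:ℝ)*t)) := Real.rpow_pos_of_pos (by norm_num) _
  have hMznn : 0 ≤ ∏ k, margZ P (z k) :=
    Finset.prod_nonneg fun k _ => PA.margZ_nonneg P h0 _
  have hPn : 0 < ∏ k, P (x k, z k) := lt_of_le_of_lt (mul_nonneg hβ.le hMznn) hb
  have hfac : ∀ k, 0 < P (x k, z k) := by
    intro k
    rcases (h0 (x k, z k)).lt_or_eq with h | h
    · exact h
    · exact absurd (Finset.prod_eq_zero (Finset.mem_univ k) h.symm) (ne_of_gt hPn)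
  have hmarg : ∀ k, 0 < margZ P (z k) := fun k =>
    lt_of_lt_of_le (hfac k)
      (Finset.single_le_sum (fun a _ => h0 (a, z k)) (Finset.mem_univ (x k)))
  have hMz : 0 < ∏ k, margZ P (z k) := Finset.prod_pos fun k _ => hmarg k
  have hlog := Real.logb_lt_logb (b := 2) (by norm_num) (by positivity) hb
  rw [Real.logb_mul (ne_of_gt hβ) (ne_of_gt hMz),
    Real.logb_rpow (by norm_num) (by norm_num),
    Real.logb_prod _ _ (fun k _ => ne_of_gt (hfac k)),
    Real.logb_prod _ _ (fun k _ => ne_of_gt (hmarg k))] at hlog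
  have : ∑ k, (if P (x k, z k) = 0 then 0
      else Real.logb 2 (P (x k, z k)) - Real.logb 2 (margZ P (z k)))
      = ∑ k, Real.logb 2 (P (x k, z k)) - ∑ k, Real.logb 2 (margZ P (z k)) := by
    rw [← Finset.sum_sub_distrib]
    exact Finset.sum_congr rfl fun k _ => by rw [if_neg (ne_of_gt (hfac k))]
  rw [this]
  linarith
end Dev
theorem privacy_amplification {𝒳 𝒵 : Type*} [Fintype 𝒳] [Fintype 𝒵]
    (P : 𝒳 × 𝒵 → ℝ) (h0 : ∀ w, 0 ≤ P w) (h1 : ∑ w, P w = 1) :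
    ∀ ε > (0 : ℝ), ∃ n₀ : ℕ, ∀ n ≥ n₀,
      ∃ (L : ℕ) (h : (Fin n → 𝒳) → Fin L),
        (2 : ℝ) ^ ((n : ℝ) * (condEntXZ P - ε)) ≤ (L : ℝ) ∧
        -- ℓ¹ distance between the law of (h(Xⁿ), Zⁿ) and uniform × P_Z^{⊗n} is ≤ ε
        (∑ j : Fin L, ∑ z : Fin n → 𝒵,
            |(∑ x : Fin n → 𝒳, if h x = j then ∏ k, P (x k, z k) else 0)
              - (1 / (L : ℝ)) * ∏ k, margZ P (z k)|) ≤ ε := by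
  intro ε hε
  by_cases hcase : condEntXZ P ≤ ε
  · -- degenerate case `H(X|Z) ≤ ε`: take `L = 1`; the distance is exactly `0`.
    refine ⟨0, fun n _ => ⟨1, fun _ => 0, ?_, ?_⟩⟩
    · have hexp : (n:ℝ) * (condEntXZ P - ε) ≤ 0 :=
        mul_nonpos_of_nonneg_of_nonpos (Nat.cast_nonneg n) (by linarith)
      calc (2:ℝ) ^ ((n:ℝ) * (condEntXZ P - ε))
          ≤ (2:ℝ) ^ (0:ℝ) := Real.rpow_le_rpow_of_exponent_le (by norm_num) hexp
        _ = ((1:ℕ):ℝ) := by norm_num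
    · have hzero : (∑ j : Fin 1, ∑ z : Fin n → 𝒵,
          |(∑ x : Fin n → 𝒳, if (fun _ : Fin n → 𝒳 => (0:Fin 1)) x = j
              then ∏ k, P (x k, z k) else 0)
            - (1 / ((1:ℕ):ℝ)) * ∏ k, margZ P (z k)|) = 0 := by
        refine Finset.sum_eq_zero fun j _ => Finset.sum_eq_zero fun z _ => ?_
        have hj : ∀ x : Fin n → 𝒳, ((fun _ : Fin n → 𝒳 => (0:Fin 1)) x = j) :=
          fun x => Subsingleton.elim _ _
        rw [Finset.sum_congr rfl fun x _ => if_pos (hj x), PA.sum_x_Pn P z]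
        norm_num
      rw [hzero]
      linarith
  · push_neg at hcase
    have hg0 : ∑ w, P w * ((if P w = 0 then 0
        else Real.logb 2 (P w) - Real.logb 2 (margZ P w.2)) + condEntXZ P) = 0 := by
      simp only [mul_add]
      rw [Finset.sum_add_distrib, PA.mean P h1, ← Finset.sum_mul, h1]
      ring
    set g : 𝒳 × 𝒵 → ℝ := fun w =>
      (if P w = 0 then 0 else Real.logb 2 (P w) - Real.logb 2 (margZ P w.2)) + condEntXZ P
      with hgdef
    set V := ∑ w, P w * g w ^ 2 with hV
    have hVnn : 0 ≤ V := Finset.sum_nonneg fun w _ => mul_nonneg (h0 w) (sq_nonneg _)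
    have hr0 : (0:ℝ) < (2:ℝ) ^ (-(ε/4)) := Real.rpow_pos_of_pos (by norm_num) _
    have hr1 : (2:ℝ) ^ (-(ε/4)) < 1 :=
      Real.rpow_lt_one_of_one_lt_of_neg (by norm_num) (by linarith)
    have hs2 : (0:ℝ) < Real.sqrt 2 := Real.sqrt_pos.mpr (by norm_num)
    obtain ⟨n₂, hn₂⟩ := exists_pow_lt_of_lt_one
      (show (0:ℝ) < ε/2/Real.sqrt 2 by positivity) hr1
    set n₁ : ℕ := ⌈16*V/ε^3⌉₊ + 1 with hn₁def
    refine ⟨max (max 1 n₁) n₂, fun n hn => ?_⟩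
    have hn1 : 1 ≤ n := le_trans (le_trans (le_max_left 1 n₁) (le_max_left _ n₂)) hn
    have hnn1 : n₁ ≤ n := le_trans (le_trans (le_max_right 1 n₁) (le_max_left _ n₂)) hn
    have hnn2 : n₂ ≤ n := le_trans (le_max_right _ n₂) hn
    have hnpos : (0:ℝ) < (n:ℝ) := by exact_mod_cast hn1
    set c := condEntXZ P with hcdef
    set Lr := (2:ℝ) ^ ((n:ℝ) * (c - ε)) with hLrdef
    have hLrpos : 0 < Lr := Real.rpow_pos_of_pos (by norm_num) _
    have hLr1 : (1:ℝ) ≤ Lr := by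
      rw [hLrdef]
      calc (1:ℝ) = (2:ℝ) ^ (0:ℝ) := by norm_num
        _ ≤ _ := Real.rpow_le_rpow_of_exponent_le (by norm_num)
            (mul_nonneg (Nat.cast_nonneg n) (by linarith))
    set L : ℕ := ⌈Lr⌉₊ with hLdef
    have hLpos : 0 < L := Nat.ceil_pos.mpr hLrpos
    have hLge : Lr ≤ (L:ℝ) := Nat.le_ceil _
    have hLle2 : (L:ℝ) ≤ 2 * Lr := by
      have := Nat.ceil_lt_add_one hLrpos.le
      linarith
    have hLR : (0:ℝ) < (L:ℝ) := by exact_mod_cast hLpos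
    set β := (2:ℝ) ^ (-((n:ℝ) * (c - ε/2))) with hβdef
    have hβpos : 0 < β := Real.rpow_pos_of_pos (by norm_num) _
    set Mz : (Fin n → 𝒵) → ℝ := fun z => ∏ k, margZ P (z k) with hMzdef
    have hMznn : ∀ z, 0 ≤ Mz z := fun z => Finset.prod_nonneg fun k _ => PA.margZ_nonneg P h0 _
    have hPnnn : ∀ (x : Fin n → 𝒳) (z : Fin n → 𝒵), 0 ≤ ∏ k, P (x k, z k) :=
      fun x z => Finset.prod_nonneg fun k _ => h0 _
    set cT : (Fin n → 𝒵) → (Fin n → 𝒳) → ℝ := fun z x =>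
      if ∏ k, P (x k, z k) ≤ β * Mz z then ∏ k, P (x k, z k) else 0 with hcTdef
    set cN : (Fin n → 𝒵) → (Fin n → 𝒳) → ℝ := fun z x =>
      if ∏ k, P (x k, z k) ≤ β * Mz z then 0 else ∏ k, P (x k, z k) with hcNdef
    have hcTnn : ∀ z x, 0 ≤ cT z x := by
      intro z x; rw [hcTdef]; dsimp only; split_ifs; exacts [hPnnn x z, le_refl 0]
    have hcNnn : ∀ z x, 0 ≤ cN z x := by
      intro z x; rw [hcNdef]; dsimp only; split_ifs; exacts [le_refl 0, hPnnn x z]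
    have hsplit : ∀ z x, cT z x + cN z x = ∏ k, P (x k, z k) := by
      intro z x; rw [hcTdef, hcNdef]; dsimp only; split_ifs <;> ring
    have hcTle : ∀ z x, cT z x ≤ β * Mz z := by
      intro z x; rw [hcTdef]; dsimp only; split_ifs with hh
      exacts [hh, mul_nonneg hβpos.le (hMznn z)]
    have hsumPn : ∀ z : Fin n → 𝒵, ∑ x : Fin n → 𝒳, (∏ k, P (x k, z k)) = Mz z :=
      fun z => PA.sum_x_Pn P z
    have haTaN : ∀ z, (∑ x, cT z x) + (∑ x, cN z x) = Mz z := by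
      intro z
      rw [← Finset.sum_add_distrib, Finset.sum_congr rfl fun x _ => hsplit z x, hsumPn z]
    have haNnn : ∀ z, 0 ≤ ∑ x, cN z x := fun z => Finset.sum_nonneg fun x _ => hcNnn z x
    have haTle : ∀ z, ∑ x, cT z x ≤ Mz z := fun z => by
      have := haTaN z; have h2 := haNnn z; linarith
    have hcT2 : ∀ z, ∑ x, (cT z x)^2 ≤ β * (Mz z)^2 := by
      intro z
      calc ∑ x, (cT z x)^2 ≤ ∑ x, (β * Mz z) * cT z x := Finset.sum_le_sum fun x _ => by
            rw [sq]; exact mul_le_mul_of_nonneg_right (hcTle z x) (hcTnn z x)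
        _ = (β * Mz z) * ∑ x, cT z x := (Finset.mul_sum _ _ _).symm
        _ ≤ (β * Mz z) * Mz z :=
            mul_le_mul_of_nonneg_left (haTle z) (mul_nonneg hβpos.le (hMznn z))
        _ = β * (Mz z)^2 := by ring
    -- Chebyshev bound on the atypical mass
    have hcheb : ∑ z, ∑ x, cN z x ≤ V / ((n:ℝ) * (ε/2)^2) := by
      rw [Finset.sum_comm]
      have hEq : ∀ (x : Fin n → 𝒳) (z : Fin n → 𝒵),
          cN z x = if β * Mz z < ∏ k, P (x k, z k) then ∏ k, P (x k, z k) else 0 := by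
        intro x z; rw [hcNdef]; dsimp only
        rcases le_or_gt (∏ k, P (x k, z k)) (β * Mz z) with hle | hlt
        · rw [if_pos hle, if_neg (not_lt.mpr hle)]
        · rw [if_neg (not_le.mpr hlt), if_pos hlt]
      rw [Finset.sum_congr rfl fun x _ => Finset.sum_congr rfl fun z _ => hEq x z, hV]
      refine PA.cheb P h0 h1 g hg0 (by omega) (show (0:ℝ) < ε/2 by linarith)
        (fun x z => β * Mz z < ∏ k, P (x k, z k)) ?_
      intro x z hb
      rw [hβdef] at hb
      have hdev := PA.deviation P h0 (c - ε/2) x z hb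
      have hsum : ∑ k, g (x k, z k)
          = (∑ k, (if P (x k, z k) = 0 then 0
              else Real.logb 2 (P (x k, z k)) - Real.logb 2 (margZ P (z k)))) + (n:ℝ) * c := by
        rw [hgdef]; dsimp only
        rw [Finset.sum_add_distrib, Finset.sum_const, Finset.card_univ, Fintype.card_fin,
          nsmul_eq_mul]
      rw [hsum]
      linarith
    -- hash function: averaging over all hash functions
    have hNe : Nonempty (Fin L) := ⟨⟨0, hLpos⟩⟩
    set NH := (Fintype.card ((Fin n → 𝒳) → Fin L) : ℝ) with hNHdef
    have hNHpos : (0:ℝ) < NH := by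
      rw [hNHdef]; exact_mod_cast Fintype.card_pos
    set B := Real.sqrt ((L:ℝ) * β) + 2 * (V / ((n:ℝ) * (ε/2)^2)) with hBdef
    set D : ((Fin n → 𝒳) → Fin L) → ℝ := fun h => ∑ j : Fin L, ∑ z : Fin n → 𝒵,
        |(∑ x : Fin n → 𝒳, if h x = j then ∏ k, P (x k, z k) else 0)
          - (1 / (L:ℝ)) * Mz z| with hDdef
    have hperjz : ∀ (j : Fin L) (z : Fin n → 𝒵),
        ∑ h : (Fin n → 𝒳) → Fin L,
            |(∑ x : Fin n → 𝒳, if h x = j then ∏ k, P (x k, z k) else 0)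
              - (1 / (L:ℝ)) * Mz z|
        ≤ NH * (Mz z * Real.sqrt (β / L)) + 2 * NH * (∑ x, cN z x) / L := by
      intro j z
      have hsplitY : ∀ h : (Fin n → 𝒳) → Fin L,
          (∑ x : Fin n → 𝒳, if h x = j then ∏ k, P (x k, z k) else 0)
          = (∑ x : Fin n → 𝒳, if h x = j then cT z x else 0)
            + (∑ x : Fin n → 𝒳, if h x = j then cN z x else 0) := by
        intro h
        rw [← Finset.sum_add_distrib]
        refine Finset.sum_congr rfl fun x _ => ?_
        by_cases hh : h x = j
        · rw [if_pos hh, if_pos hh, if_pos hh, hsplit z x]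
        · simp [hh]
      have htarget : (1 / (L:ℝ)) * Mz z = (∑ x, cT z x)/(L:ℝ) + (∑ x, cN z x)/(L:ℝ) := by
        rw [← haTaN z]; ring
      have htri : ∀ h : (Fin n → 𝒳) → Fin L,
          |(∑ x : Fin n → 𝒳, if h x = j then ∏ k, P (x k, z k) else 0) - (1 / (L:ℝ)) * Mz z|
          ≤ |(∑ x : Fin n → 𝒳, if h x = j then cT z x else 0) - (∑ x, cT z x)/(L:ℝ)|
            + |(∑ x : Fin n → 𝒳, if h x = j then cN z x else 0) - (∑ x, cN z x)/(L:ℝ)| := by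
        intro h
        calc |(∑ x : Fin n → 𝒳, if h x = j then ∏ k, P (x k, z k) else 0) - (1 / (L:ℝ)) * Mz z|
            = |((∑ x : Fin n → 𝒳, if h x = j then cT z x else 0) - (∑ x, cT z x)/(L:ℝ))
              + ((∑ x : Fin n → 𝒳, if h x = j then cN z x else 0) - (∑ x, cN z x)/(L:ℝ))| := by
              rw [hsplitY h, htarget]; ring_nf
          _ ≤ _ := abs_add_le _ _
      have hT : ∑ h : (Fin n → 𝒳) → Fin L,
          |(∑ x : Fin n → 𝒳, if h x = j then cT z x else 0) - (∑ x, cT z x)/(L:ℝ)|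
          ≤ NH * (Mz z * Real.sqrt (β / L)) := by
        have habs := PA.hash_abs hLpos (cT z) j
        rw [← hNHdef] at habs
        refine le_trans habs (mul_le_mul_of_nonneg_left ?_ hNHpos.le)
        have hle : (∑ x, (cT z x)^2)/(L:ℝ) ≤ (Mz z)^2 * (β/(L:ℝ)) := by
          rw [show (Mz z)^2 * (β/(L:ℝ)) = (β * (Mz z)^2)/(L:ℝ) by ring]
          exact div_le_div_of_nonneg_right (hcT2 z) hLR.le
        calc Real.sqrt ((∑ x, (cT z x)^2)/(L:ℝ)) ≤ Real.sqrt ((Mz z)^2 * (β/(L:ℝ))) :=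
              Real.sqrt_le_sqrt hle
          _ = Mz z * Real.sqrt (β/(L:ℝ)) := by
              rw [Real.sqrt_mul (sq_nonneg _), Real.sqrt_sq (hMznn z)]
      have hYNsum : ∑ h : (Fin n → 𝒳) → Fin L,
          (∑ x : Fin n → 𝒳, if h x = j then cN z x else 0) = NH * (∑ x, cN z x) / (L:ℝ) := by
        have he := PA.exp_Y (cN z) j
        rw [← hNHdef] at he
        rw [eq_div_iff (ne_of_gt hLR)]
        linarith
      have hN : ∑ h : (Fin n → 𝒳) → Fin L,
          |(∑ x : Fin n → 𝒳, if h x = j then cN z x else 0) - (∑ x, cN z x)/(L:ℝ)|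
          ≤ 2 * NH * (∑ x, cN z x) / (L:ℝ) := by
        have hpt : ∀ h : (Fin n → 𝒳) → Fin L,
            |(∑ x : Fin n → 𝒳, if h x = j then cN z x else 0) - (∑ x, cN z x)/(L:ℝ)|
            ≤ (∑ x : Fin n → 𝒳, if h x = j then cN z x else 0) + (∑ x, cN z x)/(L:ℝ) := by
          intro h
          have hY0 : 0 ≤ ∑ x : Fin n → 𝒳, (if h x = j then cN z x else 0) :=
            Finset.sum_nonneg fun x _ => by split_ifs; exacts [hcNnn z x, le_refl 0]
          have ha0 : 0 ≤ (∑ x, cN z x)/(L:ℝ) := div_nonneg (haNnn z) hLR.le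
          rw [abs_le]
          constructor <;> linarith
        calc ∑ h : (Fin n → 𝒳) → Fin L,
            |(∑ x : Fin n → 𝒳, if h x = j then cN z x else 0) - (∑ x, cN z x)/(L:ℝ)|
            ≤ ∑ h : (Fin n → 𝒳) → Fin L,
              ((∑ x : Fin n → 𝒳, if h x = j then cN z x else 0) + (∑ x, cN z x)/(L:ℝ)) :=
              Finset.sum_le_sum fun h _ => hpt h
          _ = (∑ h : (Fin n → 𝒳) → Fin L, (∑ x : Fin n → 𝒳, if h x = j then cN z x else 0))
              + NH * ((∑ x, cN z x)/(L:ℝ)) := by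
              rw [Finset.sum_add_distrib, Finset.sum_const, Finset.card_univ, nsmul_eq_mul,
                hNHdef]
          _ = 2 * NH * (∑ x, cN z x) / (L:ℝ) := by rw [hYNsum]; ring
      calc ∑ h : (Fin n → 𝒳) → Fin L,
          |(∑ x : Fin n → 𝒳, if h x = j then ∏ k, P (x k, z k) else 0) - (1 / (L:ℝ)) * Mz z|
          ≤ ∑ h : (Fin n → 𝒳) → Fin L,
            (|(∑ x : Fin n → 𝒳, if h x = j then cT z x else 0) - (∑ x, cT z x)/(L:ℝ)|
              + |(∑ x : Fin n → 𝒳, if h x = j then cN z x else 0) - (∑ x, cN z x)/(L:ℝ)|) :=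
            Finset.sum_le_sum fun h _ => htri h
        _ = (∑ h : (Fin n → 𝒳) → Fin L,
              |(∑ x : Fin n → 𝒳, if h x = j then cT z x else 0) - (∑ x, cT z x)/(L:ℝ)|)
            + ∑ h : (Fin n → 𝒳) → Fin L,
              |(∑ x : Fin n → 𝒳, if h x = j then cN z x else 0) - (∑ x, cN z x)/(L:ℝ)| :=
            Finset.sum_add_distrib
        _ ≤ _ := add_le_add hT hN
    have hsumD : ∑ h : (Fin n → 𝒳) → Fin L, D h ≤ NH * B := by
      have hswap : ∑ h : (Fin n → 𝒳) → Fin L, D h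
          = ∑ j : Fin L, ∑ z : Fin n → 𝒵, ∑ h : (Fin n → 𝒳) → Fin L,
              |(∑ x : Fin n → 𝒳, if h x = j then ∏ k, P (x k, z k) else 0)
                - (1 / (L:ℝ)) * Mz z| := by
        rw [hDdef]
        dsimp only
        rw [Finset.sum_comm]
        exact Finset.sum_congr rfl fun j _ => Finset.sum_comm
      rw [hswap]
      have hsum1 : ∑ z : Fin n → 𝒵, Mz z = 1 := by
        rw [hMzdef]; exact PA.sum_z_Mz P h0 h1 n
      have hLs : (L:ℝ) * Real.sqrt (β/(L:ℝ)) = Real.sqrt ((L:ℝ)*β) := by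
        rw [show (L:ℝ)*β = ((L:ℝ))^2 * (β/(L:ℝ)) by field_simp,
          Real.sqrt_mul (sq_nonneg _), Real.sqrt_sq hLR.le]
      calc ∑ j : Fin L, ∑ z : Fin n → 𝒵, ∑ h : (Fin n → 𝒳) → Fin L,
              |(∑ x : Fin n → 𝒳, if h x = j then ∏ k, P (x k, z k) else 0)
                - (1 / (L:ℝ)) * Mz z|
          ≤ ∑ j : Fin L, ∑ z : Fin n → 𝒵,
              (NH * (Mz z * Real.sqrt (β / (L:ℝ))) + 2 * NH * (∑ x, cN z x) / (L:ℝ)) :=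
            Finset.sum_le_sum fun j _ => Finset.sum_le_sum fun z _ => hperjz j z
        _ = ∑ _j : Fin L, ((NH * Real.sqrt (β / (L:ℝ)) * (∑ z : Fin n → 𝒵, Mz z))
              + (2 * NH / (L:ℝ) * ∑ z : Fin n → 𝒵, ∑ x, cN z x)) := by
            refine Finset.sum_congr rfl fun j _ => ?_
            rw [Finset.sum_add_distrib]
            congr 1
            · rw [Finset.mul_sum]
              exact Finset.sum_congr rfl fun z _ => by ring
            · rw [Finset.mul_sum]
              exact Finset.sum_congr rfl fun z _ => by ring
        _ = (L:ℝ) * (NH * Real.sqrt (β / (L:ℝ)) * (∑ z : Fin n → 𝒵, Mz z))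
            + (L:ℝ) * (2 * NH / (L:ℝ) * ∑ z : Fin n → 𝒵, ∑ x, cN z x) := by
            rw [Finset.sum_const, Finset.card_univ, Fintype.card_fin, nsmul_eq_mul]
            ring
        _ ≤ NH * Real.sqrt ((L:ℝ)*β) + 2 * NH * (V / ((n:ℝ) * (ε/2)^2)) := by
            rw [hsum1]
            have e1 : (L:ℝ) * (NH * Real.sqrt (β / (L:ℝ)) * 1) = NH * Real.sqrt ((L:ℝ)*β) := by
              rw [← hLs]; ring
            have e2 : (L:ℝ) * (2 * NH / (L:ℝ) * ∑ z : Fin n → 𝒵, ∑ x, cN z x)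
                = 2 * NH * ∑ z : Fin n → 𝒵, ∑ x, cN z x := by
              field_simp
            rw [e1, e2]
            have := mul_le_mul_of_nonneg_left hcheb
              (by positivity : (0:ℝ) ≤ 2 * NH)
            linarith
        _ = NH * B := by rw [hBdef]; ring
    have hexists : ∃ hfun : (Fin n → 𝒳) → Fin L, D hfun ≤ B := by
      have hne : (Finset.univ : Finset ((Fin n → 𝒳) → Fin L)).Nonempty :=
        Finset.univ_nonempty
      obtain ⟨hfun, _, hh⟩ := Finset.exists_le_of_sum_le hne (by
        calc ∑ h : (Fin n → 𝒳) → Fin L, D h ≤ NH * B := hsumD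
          _ = ∑ _h : (Fin n → 𝒳) → Fin L, B := by
              rw [Finset.sum_const, Finset.card_univ, nsmul_eq_mul, hNHdef])
      exact ⟨hfun, hh⟩
    obtain ⟨hfun, hhfun⟩ := hexists
    have hBle : B ≤ ε := by
      have h16 : 16*V/ε^3 ≤ (n:ℝ) := by
        have hstep : (16*V/ε^3 : ℝ) ≤ (⌈16*V/ε^3⌉₊ : ℝ) := Nat.le_ceil _
        have hstep2 : ((⌈16*V/ε^3⌉₊ : ℕ) : ℝ) ≤ (n₁ : ℝ) := by
          rw [hn₁def]; push_cast; linarith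
        have hstep3 : ((n₁:ℕ):ℝ) ≤ (n:ℝ) := by exact_mod_cast hnn1
        linarith
      have h16' : 16*V ≤ (n:ℝ)*ε^3 := by
        rw [div_le_iff₀ (by positivity : (0:ℝ) < ε^3)] at h16
        linarith
      have h2 : 2 * (V / ((n:ℝ)*(ε/2)^2)) ≤ ε/2 := by
        rw [mul_div_assoc', div_le_iff₀ (by positivity)]
        nlinarith
      have h1s : Real.sqrt ((L:ℝ)*β) ≤ ε/2 := by
        have hLrβ : Lr * β = (2:ℝ)^(-((n:ℝ)*(ε/2))) := by
          rw [hLrdef, hβdef, ← Real.rpow_add (by norm_num : (0:ℝ)<2)]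
          ring_nf
        have hLβ : (L:ℝ)*β ≤ 2 * (2:ℝ)^(-((n:ℝ)*(ε/2))) := by
          rw [← hLrβ]
          nlinarith
        calc Real.sqrt ((L:ℝ)*β) ≤ Real.sqrt (2 * (2:ℝ)^(-((n:ℝ)*(ε/2)))) :=
              Real.sqrt_le_sqrt hLβ
          _ = Real.sqrt 2 * Real.sqrt ((2:ℝ)^(-((n:ℝ)*(ε/2)))) :=
              Real.sqrt_mul (by norm_num) _
          _ = Real.sqrt 2 * ((2:ℝ)^(-(ε/4)))^n := by
              congr 1
              rw [Real.sqrt_eq_rpow, ← Real.rpow_natCast ((2:ℝ)^(-(ε/4))) n,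
                ← Real.rpow_mul (by norm_num : (0:ℝ) ≤ 2),
                ← Real.rpow_mul (by norm_num : (0:ℝ) ≤ 2)]
              congr 1
              ring
          _ ≤ Real.sqrt 2 * ((2:ℝ)^(-(ε/4)))^n₂ := by
              exact mul_le_mul_of_nonneg_left
                (pow_le_pow_of_le_one hr0.le hr1.le hnn2) hs2.le
          _ ≤ Real.sqrt 2 * (ε/2/Real.sqrt 2) :=
              mul_le_mul_of_nonneg_left hn₂.le hs2.le
          _ = ε/2 := by field_simp
      rw [hBdef]
      linarith
    refine ⟨L, hfun, ?_, ?_⟩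
    · exact hLge
    · exact le_trans hhfun hBle
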